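/- For nonnegative integers $s$ and $p$, the sum $\mathcal{J}_{s,p} = \sum_{\beta=0}^{p} \frac{(-1)^\beta\, 2^{2p-2\beta}\,(s+2p-\beta)!}{(2p-2\beta)!\,\beta!}$ equals $\frac{(s+p)!\,(s+\tfrac{3}{2})_p}{p!\,(\tfrac{1}{2})_p}$, where $(a)_n = a(a+1)\cdots(a+n-1)$ is the Pochhammer symbol. -/

import Mathlib

open Finset

private lemma poch_shift (n : ℕ) (x : ℚ) :
    (ascPochhammer ℚ (n+1)).eval x = x * (ascPochhammer ℚ n).eval (x+1) := by
  rw [ascPochhammer_succ_left]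
  simp [Polynomial.eval_comp]

private lemma poch_ne (n : ℕ) {c : ℚ} (hc : 0 < c) : (ascPochhammer ℚ n).eval c ≠ 0 :=
  (ascPochhammer_pos n c hc).ne'

private lemma vand : ∀ (p : ℕ) (a c : ℚ), 0 < c →
    ∑ γ ∈ Finset.range (p+1), (-1:ℚ)^γ * (p.choose γ) *
      (ascPochhammer ℚ γ).eval a / (ascPochhammer ℚ γ).eval c
    = (ascPochhammer ℚ p).eval (c - a) / (ascPochhammer ℚ p).eval c
  | 0, a, c, hc => by simp
  | (p+1), a, c, hc => by
    have hc1 : (0:ℚ) < c + 1 := by linarith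
    have hrec := vand p a (c+1) hc1
    rw [Finset.sum_range_succ']
    have hsplit : ∀ γ ∈ Finset.range (p+1),
        (-1:ℚ)^(γ+1) * ((p+1).choose (γ+1)) *
          (ascPochhammer ℚ (γ+1)).eval a / (ascPochhammer ℚ (γ+1)).eval c
        = (-1:ℚ)^(γ+1) * (p.choose (γ+1)) *
            (ascPochhammer ℚ (γ+1)).eval a / (ascPochhammer ℚ (γ+1)).eval c
          + (-1:ℚ)^(γ+1) * (p.choose γ) *
            (ascPochhammer ℚ (γ+1)).eval a / (ascPochhammer ℚ (γ+1)).eval c := by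
      intro γ _
      rw [Nat.choose_succ_succ]
      push_cast
      ring
    rw [Finset.sum_congr rfl hsplit, Finset.sum_add_distrib, add_right_comm]
    have h1 : ∑ γ ∈ Finset.range (p+1+1), (-1:ℚ)^γ * (p.choose γ) *
          (ascPochhammer ℚ γ).eval a / (ascPochhammer ℚ γ).eval c
        = (∑ γ ∈ Finset.range (p+1), (-1:ℚ)^(γ+1) * (p.choose (γ+1)) *
            (ascPochhammer ℚ (γ+1)).eval a / (ascPochhammer ℚ (γ+1)).eval c)
          + (-1:ℚ)^0 * (p.choose 0) *
            (ascPochhammer ℚ 0).eval a / (ascPochhammer ℚ 0).eval c :=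
      Finset.sum_range_succ' _ _
    rw [show (((p+1).choose 0 : ℕ) : ℚ) = ((p.choose 0 : ℕ) : ℚ) by norm_num]
    rw [← h1, Finset.sum_range_succ]
    have h1' : (-1:ℚ)^(p+1) * (p.choose (p+1)) *
        (ascPochhammer ℚ (p+1)).eval a / (ascPochhammer ℚ (p+1)).eval c = 0 := by
      simp [Nat.choose_succ_self]
    rw [h1', add_zero, ← Finset.sum_add_distrib]
    have h2 : ∀ γ ∈ Finset.range (p+1),
        (-1:ℚ)^γ * (p.choose γ) *
          (ascPochhammer ℚ γ).eval a / (ascPochhammer ℚ γ).eval c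
        + (-1:ℚ)^(γ+1) * (p.choose γ) *
          (ascPochhammer ℚ (γ+1)).eval a / (ascPochhammer ℚ (γ+1)).eval c
        = (c - a)/c * ((-1:ℚ)^γ * (p.choose γ) *
            (ascPochhammer ℚ γ).eval a / (ascPochhammer ℚ γ).eval (c+1)) := by
      intro γ _
      have hCne := poch_ne γ hc
      have hC1ne := poch_ne γ hc1
      have hcγ : c + (γ:ℚ) ≠ 0 := by positivity
      have hC1 : (ascPochhammer ℚ γ).eval (c+1)
          = (ascPochhammer ℚ γ).eval c * (c + γ) / c := by
        rw [eq_div_iff hc.ne']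
        rw [mul_comm ((ascPochhammer ℚ γ).eval (c+1)) c, ← poch_shift,
          ascPochhammer_succ_eval]
      rw [ascPochhammer_succ_eval (S := ℚ) γ a, ascPochhammer_succ_eval (S := ℚ) γ c, hC1]
      field_simp
      ring
    rw [Finset.sum_congr rfl h2, ← Finset.mul_sum, hrec]
    rw [poch_shift p (c - a), poch_shift p c]
    have : c - a + 1 = c + 1 - a := by ring
    rw [this]
    rw [div_mul_div_comm]

private lemma doubleFact : ∀ γ : ℕ, ((2*γ).factorial : ℚ)
    = 4^γ * (γ.factorial : ℚ) * (ascPochhammer ℚ γ).eval (1/2)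
  | 0 => by simp
  | (γ+1) => by
    have h : 2*(γ+1) = (2*γ+1)+1 := by ring
    rw [h, Nat.factorial_succ, Nat.factorial_succ, ascPochhammer_succ_eval,
      Nat.factorial_succ]
    push_cast
    rw [doubleFact γ]
    ring

theorem stmt_5 (s p : ℕ) :
    ∑ β ∈ Finset.range (p + 1),
      ((-1 : ℚ) ^ β * 2 ^ (2 * p - 2 * β) * (Nat.factorial (s + 2 * p - β) : ℚ) /
        ((Nat.factorial (2 * p - 2 * β) : ℚ) * (Nat.factorial β : ℚ)))
    = (Nat.factorial (s + p) : ℚ) * (ascPochhammer ℚ p).eval ((s : ℚ) + 3 / 2) /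
        ((Nat.factorial p : ℚ) * (ascPochhammer ℚ p).eval (1 / 2 : ℚ)) := by
  have key := vand p ((s:ℚ) + p + 1) (1/2) one_half_pos
  rw [← Finset.sum_range_reflect]
  have hcongr : ∀ γ ∈ Finset.range (p+1),
      ((-1 : ℚ) ^ (p + 1 - 1 - γ) * 2 ^ (2 * p - 2 * (p + 1 - 1 - γ)) *
          (Nat.factorial (s + 2 * p - (p + 1 - 1 - γ)) : ℚ) /
        ((Nat.factorial (2 * p - 2 * (p + 1 - 1 - γ)) : ℚ) *
          (Nat.factorial (p + 1 - 1 - γ) : ℚ)))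
      = ((-1:ℚ)^p * (Nat.factorial (s + p) : ℚ) / (Nat.factorial p : ℚ)) *
        ((-1:ℚ)^γ * (p.choose γ) *
          (ascPochhammer ℚ γ).eval ((s:ℚ) + p + 1) / (ascPochhammer ℚ γ).eval (1/2)) := by
    intro γ hγ
    have hγp : γ ≤ p := by simpa using Nat.lt_succ_iff.mp (Finset.mem_range.mp hγ)
    rw [show p + 1 - 1 - γ = p - γ by omega]
    rw [show 2 * p - 2 * (p - γ) = 2 * γ by omega]
    rw [show s + 2 * p - (p - γ) = s + p + γ by omega]
    have hsign : (-1:ℚ)^(p-γ) = (-1)^p * (-1)^γ := by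
      rw [← pow_add]
      conv_rhs => rw [show p + γ = (p - γ) + 2*γ by omega]
      rw [pow_add, pow_mul]
      norm_num
    have hfact : ((s + p + γ).factorial : ℚ)
        = ((s+p).factorial : ℚ) * (ascPochhammer ℚ γ).eval ((s:ℚ) + p + 1) := by
      rw [← Nat.factorial_mul_ascFactorial (s+p) γ]
      push_cast [Nat.cast_ascFactorial]
      ring_nf
    have hchoose : (p.choose γ : ℚ)
        = (p.factorial : ℚ) / ((γ.factorial : ℚ) * ((p-γ).factorial : ℚ)) :=
      Nat.cast_choose ℚ hγp
    have hpow : (2:ℚ)^(2*γ) = 4^γ := by rw [pow_mul]; norm_num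
    rw [hsign, hfact, doubleFact γ, hchoose, hpow]
    have h1 : ((s+p).factorial : ℚ) ≠ 0 := by positivity
    have h2 : (p.factorial : ℚ) ≠ 0 := by positivity
    have h3 : (γ.factorial : ℚ) ≠ 0 := by positivity
    have h4 : ((p-γ).factorial : ℚ) ≠ 0 := by positivity
    have h5 : (4:ℚ)^γ ≠ 0 := by positivity
    have h6 := poch_ne γ one_half_pos
    field_simp
  rw [Finset.sum_congr rfl hcongr, ← Finset.mul_sum, key]
  have hrefl : (ascPochhammer ℚ p).eval (1/2 - ((s:ℚ) + p + 1))
      = (-1:ℚ)^p * (ascPochhammer ℚ p).eval ((s:ℚ) + 3/2) := by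
    rw [show (1/2 - ((s:ℚ) + p + 1)) = -((s:ℚ) + p + 1/2) by ring,
      ascPochhammer_eval_neg_eq_descPochhammer, descPochhammer_eval_eq_ascPochhammer]
    congr 2
    ring
  rw [hrefl]
  have hsq : (-1:ℚ)^p * (-1:ℚ)^p = 1 := by
    rw [← pow_add, ← two_mul, pow_mul]; norm_num
  rw [div_mul_div_comm]
  rw [show ((-1:ℚ)^p * (Nat.factorial (s + p) : ℚ)) *
      ((-1:ℚ)^p * (ascPochhammer ℚ p).eval ((s:ℚ) + 3/2))
      = ((-1:ℚ)^p * (-1:ℚ)^p) *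
        ((Nat.factorial (s + p) : ℚ) * (ascPochhammer ℚ p).eval ((s:ℚ) + 3/2)) by ring,
    hsq, one_mul]
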